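/- For every process r and trace s ∈ Act*: if r ⇓U s, then for every prefix s' of s with r ⟹̸✓^{s'} there exists a process p such that p Must ⊕(r afterU s'). -/

import Mathlib

namespace MTP

/-- Processes of infinitary CCS with success.
`pre none p` is `τ.p`, `pre (some a) p` is `a.p`.
`sum f` is a countable sum `Σ_{i∈I} p_i` where `I = {n | f n ≠ none}`. -/
inductive Proc (Act : Type) (Const : Type) : Type where
  | one : Proc Act Const
  | const : Const → Proc Act Const
  | pre : Option Act → Proc Act Const → Proc Act Const
  | sum : (ℕ → Option (Proc Act Const)) → Proc Act Const

namespace Proc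
/-- The empty sum `0`. -/
def nil {Act Const : Type} : Proc Act Const := .sum fun _ => none
/-- Binary external sum `p + q`. -/
def ext {Act Const : Type} (p q : Proc Act Const) : Proc Act Const :=
  .sum fun n => if n = 0 then some p else if n = 1 then some q else none
end Proc

/-- Labels: visible actions, τ, and the success action ✓. -/
inductive Label (Act : Type) : Type where
  | act : Act → Label Act
  | tau : Label Act
  | ok : Label Act

/-- A CCS signature: an involutive complementation on actions, together with
a definition for every constant. -/
structure CCS (Act : Type) (Const : Type) : Type where
  co : Act → Act
  co_invol : ∀ a, co (co a) = a
  defn : Const → Proc Act Const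

variable {Act Const : Type}

/-- The transition relation of infinitary CCS with success. -/
inductive Step (S : CCS Act Const) : Proc Act Const → Label Act → Proc Act Const → Prop where
  | one : Step S .one .ok .nil
  | preAct (a : Act) (p : Proc Act Const) : Step S (.pre (some a) p) (.act a) p
  | preTau (p : Proc Act Const) : Step S (.pre none p) .tau p
  | sum {f : ℕ → Option (Proc Act Const)} {i : ℕ} {p q : Proc Act Const} {l : Label Act} :
      f i = some p → Step S p l q → Step S (.sum f) l q
  | const {A : Const} {l : Label Act} {q : Proc Act Const} :
      Step S (S.defn A) l q → Step S (.const A) l q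

/-- `p` can report success. -/
def CanOk (S : CCS Act Const) (p : Proc Act Const) : Prop := ∃ q, Step S p .ok q

/-- `p` has no τ-transition. -/
def Stable (S : CCS Act Const) (p : Proc Act Const) : Prop := ¬ ∃ q, Step S p .tau q

/-- τ-transitions of a parallel composition `p ∥ r` (server component first). -/
inductive ParTau (S : CCS Act Const) :
    Proc Act Const × Proc Act Const → Proc Act Const × Proc Act Const → Prop where
  | left {p p' r : Proc Act Const} : Step S p .tau p' → ParTau S (p, r) (p', r)
  | right {p r r' : Proc Act Const} : Step S r .tau r' → ParTau S (p, r) (p, r')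
  | sync {p p' r r' : Proc Act Const} {a : Act} :
      Step S p (.act a) p' → Step S r (.act (S.co a)) r' → ParTau S (p, r) (p', r')

/-- A state of a composition is stuck if it has no τ-transition. -/
def StateStuck (S : CCS Act Const) (st : Proc Act Const × Proc Act Const) : Prop :=
  ¬ ∃ t, ParTau S st t

/-- `ρ` encodes a maximal computation: at each stage either a real τ-step is taken, or the
state is stuck and stutters forever (encoding a finite maximal computation). -/
def MaxComp (S : CCS Act Const) (ρ : ℕ → Proc Act Const × Proc Act Const) : Prop :=
  ∀ k, ParTau S (ρ k) (ρ (k + 1)) ∨ (StateStuck S (ρ k) ∧ ρ (k + 1) = ρ k)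

/-- `p Must r`: every maximal computation of `p ∥ r` is client-successful. -/
def Must (S : CCS Act Const) (p r : Proc Act Const) : Prop :=
  ∀ ρ : ℕ → Proc Act Const × Proc Act Const,
    ρ 0 = (p, r) → MaxComp S ρ → ∃ k, CanOk S (ρ k).2

/-- `p MustSC r`: every maximal computation of `p ∥ r` is successful (both components
eventually can report success). -/
def MustSC (S : CCS Act Const) (p r : Proc Act Const) : Prop :=
  ∀ ρ : ℕ → Proc Act Const × Proc Act Const,
    ρ 0 = (p, r) → MaxComp S ρ → (∃ k, CanOk S (ρ k).2) ∧ (∃ l, CanOk S (ρ l).1)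

/-- The server testing preorder `p ⊑_svr q`. -/
def svrLe (S : CCS Act Const) (p q : Proc Act Const) : Prop :=
  ∀ r, Must S p r → Must S q r

/-- The client testing preorder `r₁ ⊑_clt r₂`. -/
def cltLe (S : CCS Act Const) (r₁ r₂ : Proc Act Const) : Prop :=
  ∀ p, Must S p r₁ → Must S p r₂

/-- The peer testing preorder `p ⊑_p2p q`. -/
def p2pLe (S : CCS Act Const) (p q : Proc Act Const) : Prop :=
  ∀ r, MustSC S p r → MustSC S q r

/-- Weak transition `p ⟹^s q` for finite traces `s ∈ Act*`. -/
inductive Weak (S : CCS Act Const) : Proc Act Const → List Act → Proc Act Const → Prop where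
  | refl (p : Proc Act Const) : Weak S p [] p
  | tau {p p' q : Proc Act Const} {s : List Act} :
      Step S p .tau p' → Weak S p' s q → Weak S p s q
  | act {p p' q : Proc Act Const} {a : Act} {s : List Act} :
      Step S p (.act a) p' → Weak S p' s q → Weak S p (a :: s) q

/-- Unsuccessful weak transition `p ⟹̸✓^s q`: as `Weak` but no state passed through
(including the end points) can report success. -/
inductive UWeak (S : CCS Act Const) : Proc Act Const → List Act → Proc Act Const → Prop where
  | refl {p : Proc Act Const} : ¬ CanOk S p → UWeak S p [] p
  | tau {p p' q : Proc Act Const} {s : List Act} :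
      ¬ CanOk S p → Step S p .tau p' → UWeak S p' s q → UWeak S p s q
  | act {p p' q : Proc Act Const} {a : Act} {s : List Act} :
      ¬ CanOk S p → Step S p (.act a) p' → UWeak S p' s q → UWeak S p (a :: s) q

/-- View `Option Act` (`none` = τ) as a label. -/
def optLabel : Option Act → Label Act
  | some a => .act a
  | none => .tau

/-- The length-`n` prefix of an infinite trace `u ∈ Act^∞`. -/
def prefixList (u : ℕ → Act) (n : ℕ) : List Act := List.ofFn fun i : Fin n => u i.1

/-- Infinite weak transition `p ⟹^u` for `u ∈ Act^∞`. -/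
def InfWeak (S : CCS Act Const) (p : Proc Act Const) (u : ℕ → Act) : Prop :=
  ∃ (ρ : ℕ → Proc Act Const) (ℓ : ℕ → Option Act),
    ρ 0 = p ∧ (∀ k, Step S (ρ k) (optLabel (ℓ k)) (ρ (k + 1))) ∧
    ∀ n, ∃ k, (List.range k).filterMap ℓ = prefixList u n

/-- Infinite unsuccessful weak transition `p ⟹̸✓^u` for `u ∈ Act^∞`. -/
def InfUWeak (S : CCS Act Const) (p : Proc Act Const) (u : ℕ → Act) : Prop :=
  ∃ (ρ : ℕ → Proc Act Const) (ℓ : ℕ → Option Act),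
    ρ 0 = p ∧ (∀ k, Step S (ρ k) (optLabel (ℓ k)) (ρ (k + 1))) ∧
    (∀ k, ¬ CanOk S (ρ k)) ∧
    ∀ n, ∃ k, (List.range k).filterMap ℓ = prefixList u n

/-- `p ⇓`: no infinite sequence of τ-transitions from `p`. -/
def Conv (S : CCS Act Const) (p : Proc Act Const) : Prop :=
  ¬ ∃ ρ : ℕ → Proc Act Const, ρ 0 = p ∧ ∀ k, Step S (ρ k) .tau (ρ (k + 1))

/-- `p after s`. -/
def after (S : CCS Act Const) (p : Proc Act Const) (s : List Act) : Set (Proc Act Const) :=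
  {q | Weak S p s q}

/-- `p afterU s`: residuals after unsuccessful traces. -/
def afterU (S : CCS Act Const) (p : Proc Act Const) (s : List Act) : Set (Proc Act Const) :=
  {q | UWeak S p s q}

-- `⊕X = Σ_{x∈X} τ.x` for a nonempty countable set `X` (junk value otherwise).
open scoped Classical in
noncomputable def bigOplus (X : Set (Proc Act Const)) : Proc Act Const :=
  if h : ∃ f : ℕ → Proc Act Const, Set.range f = X then
    Proc.sum fun n => some (.pre none (h.choose n))
  else Proc.nil

/-- The ready set `S(q)`. -/
def ready (S : CCS Act Const) (q : Proc Act Const) : Set Act :=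
  {a | ∃ q', Step S q (.act a) q'}

/-- The acceptance set `A(p, s)`. -/
def acc (S : CCS Act Const) (p : Proc Act Const) (s : List Act) : Set (Set Act) :=
  {A | ∃ q, Weak S p s q ∧ Stable S q ∧ A = ready S q}

/-- The unsuccessful acceptance set `A✗(p, s)`. -/
def accU (S : CCS Act Const) (p : Proc Act Const) (s : List Act) : Set (Set Act) :=
  {A | ∃ q, UWeak S p s q ∧ Stable S q ∧ A = ready S q}

/-- The usable clients. -/
def Uclt (S : CCS Act Const) : Set (Proc Act Const) := {r | ∃ p, Must S p r}

/-- The usable servers. -/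
def Usvr (S : CCS Act Const) : Set (Proc Act Const) := {p | ∃ r, Must S p r}

/-- Client usability along an unsuccessful trace: `r ⇓U s`. -/
def usbU (S : CCS Act Const) : Proc Act Const → List Act → Prop
  | r, [] => r ∈ Uclt S
  | r, a :: s => r ∈ Uclt S ∧ ((∃ q, UWeak S r [a] q) → usbU S (bigOplus (afterU S r [a])) s)

/-- Client usability along an infinite trace. -/
def usbUInf (S : CCS Act Const) (r : Proc Act Const) (u : ℕ → Act) : Prop :=
  ∀ n, usbU S r (prefixList u n)

/-- Usable actions of a client after `s`: `uaU(r, s)`. -/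
def uaU (S : CCS Act Const) (r : Proc Act Const) (s : List Act) : Set Act :=
  {a | (∃ q, UWeak S r (s ++ [a]) q) → usbU S r (s ++ [a])}

/-- Convergence along a trace: `p ⇓ s`. -/
def convAlong (S : CCS Act Const) : Proc Act Const → List Act → Prop
  | p, [] => Conv S p
  | p, a :: s => Conv S p ∧ ((∃ q, Weak S p [a] q) → convAlong S (bigOplus (after S p [a])) s)

/-- Server usability along a trace: `p ⇓U' s`. -/
def usbS (S : CCS Act Const) : Proc Act Const → List Act → Prop
  | p, [] => p ∈ Usvr S
  | p, a :: s => p ∈ Usvr S ∧ ((∃ q, Weak S p [a] q) → usbS S (bigOplus (after S p [a])) s)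

/-- Server convergence `p ⇓svr s`. -/
def convS (S : CCS Act Const) (p : Proc Act Const) (s : List Act) : Prop :=
  convAlong S p s ∧ usbS S p s

/-- Server convergence along an infinite trace. -/
def convSInf (S : CCS Act Const) (p : Proc Act Const) (u : ℕ → Act) : Prop :=
  ∀ n, convS S p (prefixList u n)

/-- Usable actions of a server after `s`: `uaS(p, s)`. -/
def uaS (S : CCS Act Const) (p : Proc Act Const) (s : List Act) : Set Act :=
  {a | (∃ q, Weak S p s q) → usbS S p (s ++ [a])}

/-- Peer convergence `p ⇓p2p s`. -/
def convP (S : CCS Act Const) (p : Proc Act Const) (s : List Act) : Prop :=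
  convAlong S p s ∧ usbU S p s

/-- Peer convergence along an infinite trace. -/
def convPInf (S : CCS Act Const) (p : Proc Act Const) (u : ℕ → Act) : Prop :=
  ∀ n, convP S p (prefixList u n)

/-- The semantic client preorder `r₁ ≼_clt r₂`. -/
def semClt (S : CCS Act Const) (r₁ r₂ : Proc Act Const) : Prop :=
  (∀ s : List Act, usbU S r₁ s →
    usbU S r₂ s ∧ ∀ B ∈ accU S r₂ s, ∃ A ∈ accU S r₁ s, A ∩ uaU S r₁ s ⊆ B) ∧
  (∀ s : List Act, usbU S r₁ s → (∃ q, UWeak S r₂ s q) → ∃ q, UWeak S r₁ s q) ∧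
  (∀ u : ℕ → Act, usbUInf S r₁ u → InfUWeak S r₂ u → InfUWeak S r₁ u)

/-- The semantic server preorder `p ≼_svr q`. -/
def semSvr (S : CCS Act Const) (p q : Proc Act Const) : Prop :=
  (∀ s : List Act, convS S p s →
    convS S q s ∧ ∀ B ∈ acc S q s, ∃ A ∈ acc S p s, A ∩ uaS S p s ⊆ B) ∧
  (∀ s : List Act, convS S p s → (∃ q', Weak S q s q') → ∃ p', Weak S p s p') ∧
  (∀ u : ℕ → Act, convSInf S p u → InfWeak S q u → InfWeak S p u)

/-- The auxiliary semantic peer relation `p ≼'_p2p q`. -/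
def semP2pAux (S : CCS Act Const) (p q : Proc Act Const) : Prop :=
  (∀ s : List Act, convP S p s →
    convAlong S q s ∧ ∀ B ∈ acc S q s, ∃ A ∈ acc S p s, A ∩ uaU S p s ⊆ B) ∧
  (∀ s : List Act, convP S p s → (∃ q', Weak S q s q') → ∃ p', Weak S p s p') ∧
  (∀ u : ℕ → Act, convPInf S p u → InfWeak S q u → InfWeak S p u)

/-- The semantic peer preorder `p ≼_p2p q`. -/
def semP2p (S : CCS Act Const) (p q : Proc Act Const) : Prop :=
  semClt S p q ∧ semP2pAux S p q

end MTP

namespace MTP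

variable {Act Const : Type}

/-! ### Countability of reachable sets -/

/-- Decode a step derivation from a list of sum-indices. -/
def decode (S : CCS Act Const) : Proc Act Const → List ℕ → Option (Label Act × Proc Act Const)
  | .one, [] => some (.ok, .nil)
  | .pre (some a) p, [] => some (.act a, p)
  | .pre none p, [] => some (.tau, p)
  | .sum f, (i :: cs) => (f i).bind fun q => decode S q cs
  | .const A, (_ :: cs) => decode S (S.defn A) cs
  | _, _ => none

lemma step_decode {S : CCS Act Const} {p : Proc Act Const} {l : Label Act} {q : Proc Act Const}
    (h : Step S p l q) : ∃ cs : List ℕ, decode S p cs = some (l, q) := by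
  induction h with
  | one => exact ⟨[], rfl⟩
  | preAct a p => exact ⟨[], rfl⟩
  | preTau p => exact ⟨[], rfl⟩
  | @sum f i p q l hf _ ih =>
      obtain ⟨cs, hcs⟩ := ih
      exact ⟨i :: cs, by simp [decode, hf, hcs]⟩
  | const _ ih =>
      obtain ⟨cs, hcs⟩ := ih
      exact ⟨0 :: cs, by simpa [decode] using hcs⟩

/-- Decode a multi-step path. -/
def reach (S : CCS Act Const) : Proc Act Const → List (List ℕ) → Option (Proc Act Const)
  | p, [] => some p
  | p, cs :: L => (decode S p cs).bind fun lq => reach S lq.2 L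

lemma uweak_reach {S : CCS Act Const} : ∀ {r q : Proc Act Const} {s : List Act},
    UWeak S r s q → ∃ L : List (List ℕ), reach S r L = some q := by
  intro r q s h
  induction h with
  | refl _ => exact ⟨[], rfl⟩
  | tau _ hstep _ ih =>
      obtain ⟨cs, hcs⟩ := step_decode hstep
      obtain ⟨L, hL⟩ := ih
      exact ⟨cs :: L, by simp [reach, hcs, hL]⟩
  | act _ hstep _ ih =>
      obtain ⟨cs, hcs⟩ := step_decode hstep
      obtain ⟨L, hL⟩ := ih
      exact ⟨cs :: L, by simp [reach, hcs, hL]⟩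

lemma afterU_countable (S : CCS Act Const) (r : Proc Act Const) (s : List Act) :
    (afterU S r s).Countable := by
  have hsub : afterU S r s ⊆ ⋃ L : List (List ℕ), {q | reach S r L = some q} := by
    intro q hq
    obtain ⟨L, hL⟩ := uweak_reach hq
    exact Set.mem_iUnion.mpr ⟨L, hL⟩
  refine Set.Countable.mono hsub (Set.countable_iUnion fun L => ?_)
  refine Set.Subsingleton.countable fun q1 h1 q2 h2 => ?_
  simp only [Set.mem_setOf_eq] at h1 h2
  rw [h1] at h2
  exact Option.some_injective _ h2

lemma afterU_enum {S : CCS Act Const} {r : Proc Act Const} {s : List Act}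
    (hne : (afterU S r s).Nonempty) :
    ∃ f : ℕ → Proc Act Const, Set.range f = afterU S r s := by
  obtain ⟨f, hf⟩ := (afterU_countable S r s).exists_eq_range hne
  exact ⟨f, hf.symm⟩

/-! ### Basic facts about `bigOplus` and `UWeak` -/

lemma step_bigOplus {S : CCS Act Const} {X : Set (Proc Act Const)}
    (hE : ∃ f : ℕ → Proc Act Const, Set.range f = X) {l : Label Act} {q : Proc Act Const} :
    Step S (bigOplus X) l q ↔ l = .tau ∧ q ∈ X := by
  classical
  unfold bigOplus
  rw [dif_pos hE]
  constructor
  · intro h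
    cases h with
    | @sum f i p q l hf hstep =>
        simp only [Option.some.injEq] at hf
        rw [← hf] at hstep
        cases hstep
        refine ⟨rfl, ?_⟩
        have hm : hE.choose i ∈ Set.range hE.choose := ⟨i, rfl⟩
        rwa [hE.choose_spec] at hm
  · rintro ⟨rfl, hq⟩
    rw [← hE.choose_spec] at hq
    obtain ⟨i, rfl⟩ := hq
    exact Step.sum (i := i) rfl (Step.preTau _)

lemma bigOplus_notOk {S : CCS Act Const} {X : Set (Proc Act Const)}
    (hE : ∃ f : ℕ → Proc Act Const, Set.range f = X) : ¬ CanOk S (bigOplus X) := by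
  rintro ⟨q, h⟩
  exact nomatch ((step_bigOplus hE).mp h).1

lemma uweak_notOk_left {S : CCS Act Const} {p q : Proc Act Const} {s : List Act}
    (h : UWeak S p s q) : ¬ CanOk S p := by
  cases h <;> assumption

lemma uweak_notOk_right {S : CCS Act Const} : ∀ {p q : Proc Act Const} {s : List Act},
    UWeak S p s q → ¬ CanOk S q := by
  intro p q s h
  induction h with
  | refl h => exact h
  | tau _ _ _ ih => exact ih
  | act _ _ _ ih => exact ih

lemma uweak_cons {S : CCS Act Const} : ∀ {r q : Proc Act Const} {s : List Act},
    UWeak S r s q → ∀ {a : Act} {t : List Act}, s = a :: t →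
      ∃ x, UWeak S r [a] x ∧ UWeak S x t q := by
  intro r q s h
  induction h with
  | refl _ => intro a t hs; exact absurd hs (by simp)
  | tau hno hstep _ ih =>
      intro a t hs
      obtain ⟨x, h1, h2⟩ := ih hs
      exact ⟨x, .tau hno hstep h1, h2⟩
  | act hno hstep hrest _ =>
      intro a t hs
      injection hs with h1 h2
      subst h1; subst h2
      exact ⟨_, .act hno hstep (.refl (uweak_notOk_left hrest)), hrest⟩

end MTP

namespace MTP

variable {Act Const : Type}

lemma uweak_nil_path {S : CCS Act Const} : ∀ {r x : Proc Act Const} {s : List Act},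
    UWeak S r s x → s = [] →
    ∃ (g : ℕ → Proc Act Const) (m : ℕ), g 0 = r ∧ (∀ i, m ≤ i → g i = x) ∧
      (∀ i, i < m → Step S (g i) .tau (g (i + 1))) ∧ (∀ i, i ≤ m → ¬ CanOk S (g i)) := by
  intro r x s h
  induction h with
  | refl hno =>
      intro _
      exact ⟨fun _ => _, 0, rfl, fun i _ => rfl, fun i hi => absurd hi (by omega),
        fun i _ => hno⟩
  | tau hno hstep _ ih =>
      intro hs
      obtain ⟨g, m, h1, h2, h3, h4⟩ := ih hs
      refine ⟨fun i => match i with | 0 => _ | (j + 1) => g j, m + 1, rfl, ?_, ?_, ?_⟩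
      · intro i hi
        match i, hi with
        | (j + 1), hi => exact h2 j (by omega)
      · intro i hi
        match i with
        | 0 => show Step S _ .tau (g 0); rw [h1]; exact hstep
        | (j + 1) => exact h3 j (by omega)
      · intro i hi
        match i with
        | 0 => exact hno
        | (j + 1) => exact h4 j (by omega)
  | act _ _ _ _ =>
      intro hs
      exact absurd hs (by simp)

/-- Master lemma: if `p Must r`, `r` cannot report success, and `X` is a nonempty
enumerable set of processes reachable from `r` by unsuccessful τ-paths, then
`p Must ⊕X`. -/
lemma mustG {S : CCS Act Const} {p r : Proc Act Const} {X : Set (Proc Act Const)}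
    (hM : Must S p r) (hno : ¬ CanOk S r)
    (hE : ∃ f : ℕ → Proc Act Const, Set.range f = X)
    (hne : X.Nonempty)
    (hX : ∀ x ∈ X, UWeak S r [] x) :
    Must S p (bigOplus X) := by
  intro ρ h0 hmax
  classical
  by_cases hall : ∀ j, Step S (ρ j).1 .tau (ρ (j + 1)).1 ∧ (ρ (j + 1)).2 = bigOplus X
  · exfalso
    have hM' := hM (fun j => ((ρ j).1, r)) (by show ((ρ 0).1, r) = (p, r); rw [h0]) (fun j => Or.inl (ParTau.left (hall j).1))
    obtain ⟨k, hk⟩ := hM'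
    exact hno hk
  · have hex : ∃ j, ¬ (Step S (ρ j).1 .tau (ρ (j + 1)).1 ∧ (ρ (j + 1)).2 = bigOplus X) :=
      not_forall.mp hall
    set k := Nat.find hex with hkdef
    have hk : ¬ (Step S (ρ k).1 .tau (ρ (k + 1)).1 ∧ (ρ (k + 1)).2 = bigOplus X) :=
      Nat.find_spec hex
    have hlt : ∀ i, i < k → Step S (ρ i).1 .tau (ρ (i + 1)).1 ∧ (ρ (i + 1)).2 = bigOplus X :=
      fun i hi => not_not.mp (Nat.find_min hex hi)
    have h2 : ∀ i, i ≤ k → (ρ i).2 = bigOplus X := by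
      intro i hi
      induction i with
      | zero => rw [h0]
      | succ n ihn => exact (hlt n (by omega)).2
    obtain ⟨x0, hx0⟩ := hne
    have hpar : ParTau S (ρ k) (ρ (k + 1)) := by
      rcases hmax k with h | h
      · exact h
      · exfalso
        apply h.1
        refine ⟨((ρ k).1, x0), ParTau.right ?_⟩
        rw [h2 k le_rfl]
        exact (step_bigOplus hE).mpr ⟨rfl, hx0⟩
    obtain ⟨pk, rk, hk1⟩ : ∃ a b, ρ k = (a, b) := ⟨(ρ k).1, (ρ k).2, rfl⟩
    obtain ⟨pk', rk', hk2⟩ : ∃ a b, ρ (k + 1) = (a, b) := ⟨(ρ (k + 1)).1, (ρ (k + 1)).2, rfl⟩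
    have hrk : rk = bigOplus X := by
      have := h2 k le_rfl; rw [hk1] at this; exact this
    subst hrk
    rw [hk1, hk2] at hpar
    cases hpar with
    | left hstep =>
        exact absurd ⟨by rw [hk1, hk2]; exact hstep, by rw [hk2]⟩ hk
    | sync hs1 hs2 =>
        exact nomatch ((step_bigOplus hE).mp hs2).1
    | right hstep =>
        obtain ⟨-, hxX⟩ := (step_bigOplus hE).mp hstep
        obtain ⟨g, m, hg0, hgx, hgstep, hgok⟩ := uweak_nil_path (hX rk' hxX) rfl
        set σ : ℕ → Proc Act Const × Proc Act Const := fun j =>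
          if j < k then ((ρ j).1, r) else if j ≤ k + m then (pk, g (j - k)) else ρ (j - m + 1)
          with hσdef
        have hσA : ∀ j, j ≤ k → σ j = ((ρ j).1, r) := by
          intro j hj
          by_cases h : j < k
          · simp only [hσdef, if_pos h]
          · have hjk : j = k := by omega
            subst hjk
            simp only [hσdef, if_neg h, if_pos (Nat.le_add_right k m), Nat.sub_self, hg0, hk1]
        have hσB : ∀ i, i ≤ m → σ (k + i) = (pk, g i) := by
          intro i hi
          have h1 : ¬ (k + i < k) := by omega
          have h2' : k + i ≤ k + m := by omega
          simp only [hσdef, if_neg h1, if_pos h2', Nat.add_sub_cancel_left]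
        have hσC : ∀ j, k + m ≤ j → σ j = ρ (j - m + 1) := by
          intro j hj
          by_cases h : j = k + m
          · subst h
            have := hσB m le_rfl
            rw [this, hgx m le_rfl]
            have : k + m - m + 1 = k + 1 := by omega
            rw [this, hk2]
          · have h1 : ¬ (j < k) := by omega
            have h2' : ¬ (j ≤ k + m) := by omega
            simp only [hσdef, if_neg h1, if_neg h2']
        have hσ0 : σ 0 = (p, r) := by
          rw [hσA 0 (Nat.zero_le k), h0]
        have hmax' : MaxComp S σ := by
          intro j
          rcases lt_or_ge j k with hj | hj
          · left
            rw [hσA j (le_of_lt hj), hσA (j + 1) hj]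
            exact ParTau.left (hlt j hj).1
          · rcases lt_or_ge j (k + m) with hj2 | hj2
            · left
              have hi : j - k < m := by omega
              have e1 : k + (j - k) = j := by omega
              have e2 : k + (j - k + 1) = j + 1 := by omega
              have eA := hσB (j - k) (le_of_lt hi)
              have eB := hσB (j - k + 1) (by omega)
              rw [e1] at eA
              rw [e2] at eB
              rw [eA, eB]
              exact ParTau.right (hgstep (j - k) hi)
            · have e1 := hσC j hj2
              have e2 : σ (j + 1) = ρ (j - m + 1 + 1) := by
                rw [hσC (j + 1) (by omega)]
                congr 1
                omega
              rw [e1, e2]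
              exact hmax (j - m + 1)
        obtain ⟨t, ht⟩ := hM σ hσ0 hmax'
        rcases le_or_gt t k with htk | htk
        · rw [hσA t htk] at ht
          exact absurd ht hno
        · rcases le_or_gt t (k + m) with htm | htm
          · have e : t = k + (t - k) := by omega
            rw [e, hσB (t - k) (by omega)] at ht
            exact absurd ht (hgok (t - k) (by omega))
          · rw [hσC t (by omega)] at ht
            exact ⟨t - m + 1, ht⟩

end MTP

namespace MTP

variable {Act Const : Type}

/-- Base case: a usable client that cannot succeed has a server for `⊕(r afterU ε)`. -/
lemma base_case {S : CCS Act Const} {r : Proc Act Const}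
    (hU : r ∈ Uclt S) (hq : ∃ q, UWeak S r [] q) :
    ∃ p, Must S p (bigOplus (afterU S r [])) := by
  obtain ⟨p, hMp⟩ := hU
  obtain ⟨q, hq⟩ := hq
  have hne : (afterU S r []).Nonempty := ⟨q, hq⟩
  exact ⟨p, mustG hMp (uweak_notOk_left hq) (afterU_enum hne) hne (fun x hx => hx)⟩

end MTP

/-- Lemma 5.2: if `r ⇓U s` then for every prefix `s'` of `s` performed
unsuccessfully by `r` there is a server satisfying `⊕(r afterU s')`. -/
theorem usbU_prefix_residual_usable {Act Const : Type} (S : MTP.CCS Act Const)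
    (r : MTP.Proc Act Const) (s : List Act)
    (hUsb : MTP.usbU S r s) :
    ∀ s' : List Act, s' <+: s → (∃ q, MTP.UWeak S r s' q) →
      ∃ p : MTP.Proc Act Const, MTP.Must S p (MTP.bigOplus (MTP.afterU S r s')) := by
  induction s generalizing r with
  | nil =>
      intro s' hpre hq
      rw [List.prefix_nil.mp hpre] at *
      exact MTP.base_case hUsb hq
  | cons a t ih =>
      intro s' hpre hq
      cases s' with
      | nil => exact MTP.base_case hUsb.1 hq
      | cons b t' =>
          obtain ⟨hb, ht'⟩ := List.cons_prefix_cons.mp hpre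
          subst hb
          obtain ⟨q, hq⟩ := hq
          obtain ⟨x, hx1, hx2⟩ := MTP.uweak_cons hq rfl
          have hX1ne : (MTP.afterU S r [b]).Nonempty := ⟨x, hx1⟩
          have hE1 := MTP.afterU_enum hX1ne
          have husb2 : MTP.usbU S (MTP.bigOplus (MTP.afterU S r [b])) t := hUsb.2 ⟨x, hx1⟩
          have hoq : MTP.UWeak S (MTP.bigOplus (MTP.afterU S r [b])) t' q :=
            .tau (MTP.bigOplus_notOk hE1) ((MTP.step_bigOplus hE1).mpr ⟨rfl, hx1⟩) hx2
          obtain ⟨p, hMp⟩ := ih (MTP.bigOplus (MTP.afterU S r [b])) husb2 t' ht' ⟨q, hoq⟩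
          have hZne : (MTP.afterU S (MTP.bigOplus (MTP.afterU S r [b])) t').Nonempty := ⟨q, hoq⟩
          have hEZ := MTP.afterU_enum hZne
          have hYne : (MTP.afterU S r (b :: t')).Nonempty := ⟨q, hq⟩
          refine ⟨p, MTP.mustG hMp (MTP.bigOplus_notOk hEZ) (MTP.afterU_enum hYne) hYne ?_⟩
          intro y hy
          obtain ⟨x', hx1', hx2'⟩ := MTP.uweak_cons hy rfl
          have hyZ : MTP.UWeak S (MTP.bigOplus (MTP.afterU S r [b])) t' y :=
            .tau (MTP.bigOplus_notOk hE1) ((MTP.step_bigOplus hE1).mpr ⟨rfl, hx1'⟩) hx2'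
          exact .tau (MTP.bigOplus_notOk hEZ) ((MTP.step_bigOplus hEZ).mpr ⟨rfl, hyZ⟩)
            (.refl (MTP.uweak_notOk_right hy))
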